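/- Let g be a symplectic automorphism of the complex Hilbert space V (i.e., a real-linear automorphism preserving Ω = Im<·|·>), with complex-linear part C_g and antilinear part A_g. Then C_g* C_g − A_g* A_g = I (adjoints relative to the real inner product Re<·|·>), hence ‖C_g v‖² = ‖A_g v‖² + ‖v‖² for all v ∈ V, and consequently C_g is bounded below by 1, injective, has dense range, and is invertible. -/

import Mathlib

/-- The complex-linear part `C_f = ½(f − JfJ)` of a real-linear map `f`. -/
noncomputable def Cpart {V : Type*} [AddCommGroup V] [Module ℂ V] (f : V → V) : V → V :=
  fun v => (2 : ℂ)⁻¹ • (f v - Complex.I • f (Complex.I • v))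

/-- The antilinear part `A_f = ½(f + JfJ)` of a real-linear map `f`. -/
noncomputable def Apart {V : Type*} [AddCommGroup V] [Module ℂ V] (f : V → V) : V → V :=
  fun v => (2 : ℂ)⁻¹ • (f v + Complex.I • f (Complex.I • v))

section Aux

variable {V : Type*} [NormedAddCommGroup V] [InnerProductSpace ℂ V]

lemma key (f : V → V)
    (hf : ∀ x y : V, (inner ℂ (f x) (f y) : ℂ).im = (inner ℂ x y : ℂ).im) (x y : V) :
    (inner ℂ (Cpart f x) (Cpart f y) : ℂ).re - (inner ℂ (Apart f x) (Apart f y) : ℂ).re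
      = (inner ℂ x y : ℂ).re := by
  set a : ℂ := inner ℂ (f x) (f y) with ha
  set b : ℂ := inner ℂ (f x) (f (Complex.I • y)) with hb
  set c : ℂ := inner ℂ (f (Complex.I • x)) (f y) with hc
  set d : ℂ := inner ℂ (f (Complex.I • x)) (f (Complex.I • y)) with hd
  have hC : (inner ℂ (Cpart f x) (Cpart f y) : ℂ)
      = (4:ℂ)⁻¹ * (a - Complex.I * b + Complex.I * c + d) := by
    simp only [Cpart, inner_smul_left, inner_smul_right, inner_sub_left, inner_sub_right,
      map_inv₀, Complex.conj_I, Complex.conj_ofNat, ← ha, ← hb, ← hc, ← hd]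
    ring_nf
    rw [Complex.I_sq]
    ring
  have hA : (inner ℂ (Apart f x) (Apart f y) : ℂ)
      = (4:ℂ)⁻¹ * (a + Complex.I * b - Complex.I * c + d) := by
    simp only [Apart, inner_smul_left, inner_smul_right, inner_add_left, inner_add_right,
      map_inv₀, Complex.conj_I, Complex.conj_ofNat, ← ha, ← hb, ← hc, ← hd]
    ring_nf
    rw [Complex.I_sq]
    ring
  have e1 : b.im = (inner ℂ x y : ℂ).re := by
    rw [hb, hf, inner_smul_right]; simp [Complex.mul_im]
  have e2 : c.im = -(inner ℂ x y : ℂ).re := by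
    rw [hc, hf, inner_smul_left]; simp [Complex.mul_im]
  rw [hC, hA, ← Complex.sub_re]
  have h3 : (4:ℂ)⁻¹ * (a - Complex.I * b + Complex.I * c + d)
      - (4:ℂ)⁻¹ * (a + Complex.I * b - Complex.I * c + d)
      = (2:ℂ)⁻¹ * (Complex.I * (c - b)) := by ring
  rw [h3]
  simp [Complex.mul_re, Complex.mul_im, e1, e2]
  ring

lemma re_inner_self (v : V) : (inner ℂ v v : ℂ).re = ‖v‖ ^ 2 := by
  exact_mod_cast inner_self_eq_norm_sq (𝕜 := ℂ) v

lemma key_norm (f : V → V)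
    (hf : ∀ x y : V, (inner ℂ (f x) (f y) : ℂ).im = (inner ℂ x y : ℂ).im) (v : V) :
    ‖Cpart f v‖ ^ 2 = ‖Apart f v‖ ^ 2 + ‖v‖ ^ 2 := by
  have := key f hf v v
  rw [re_inner_self, re_inner_self, re_inner_self] at this
  linarith

lemma key_bound (f : V → V)
    (hf : ∀ x y : V, (inner ℂ (f x) (f y) : ℂ).im = (inner ℂ x y : ℂ).im) (v : V) :
    ‖v‖ ≤ ‖Cpart f v‖ := by
  have h := key_norm f hf v
  have h2 : ‖v‖ ^ 2 ≤ ‖Cpart f v‖ ^ 2 := by nlinarith [sq_nonneg ‖Apart f v‖]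
  exact (pow_le_pow_iff_left₀ (norm_nonneg _) (norm_nonneg _) two_ne_zero).mp h2

lemma adjoint_id (g h : V → V)
    (hiz : ∀ x z : V, (inner ℂ (g x) z : ℂ).im = (inner ℂ x (h z) : ℂ).im) (x y : V) :
    (inner ℂ (Cpart g x) y : ℂ).re = (inner ℂ x (Cpart h y) : ℂ).re := by
  have L1 : (inner ℂ (g x) y : ℂ).re = (inner ℂ x (h (Complex.I • y)) : ℂ).im := by
    have := hiz x (Complex.I • y)
    rw [inner_smul_right] at this
    simpa [Complex.mul_im] using this
  have L2 : (inner ℂ (g (Complex.I • x)) y : ℂ).im = -(inner ℂ x (h y) : ℂ).re := by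
    rw [hiz, inner_smul_left]; simp [Complex.mul_im]
  have hCg : (inner ℂ (Cpart g x) y : ℂ)
      = (2:ℂ)⁻¹ * ((inner ℂ (g x) y : ℂ) + Complex.I * (inner ℂ (g (Complex.I • x)) y : ℂ)) := by
    simp only [Cpart, inner_sub_left, inner_smul_left, map_inv₀, Complex.conj_I,
      Complex.conj_ofNat]
    ring
  have hCh : (inner ℂ x (Cpart h y) : ℂ)
      = (2:ℂ)⁻¹ * ((inner ℂ x (h y) : ℂ) - Complex.I * (inner ℂ x (h (Complex.I • y)) : ℂ)) := by
    simp only [Cpart, inner_sub_right, inner_smul_right]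
  rw [hCg, hCh]
  simp only [Complex.mul_re, Complex.mul_im, Complex.add_re, Complex.add_im, Complex.sub_re,
    Complex.sub_im, Complex.I_re, Complex.I_im, Complex.inv_re, Complex.inv_im,
    Complex.re_ofNat, Complex.im_ofNat, Complex.normSq_ofNat]
  rw [L2, ← L1]
  ring

lemma Cpart_add (g : V →L[ℝ] V) (u w : V) :
    Cpart (g : V → V) (u + w) = Cpart (g : V → V) u + Cpart (g : V → V) w := by
  simp only [Cpart, smul_add, map_add]
  module

lemma Cpart_real_smul (g : V →L[ℝ] V) (r : ℝ) (v : V) :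
    Cpart (g : V → V) (r • v) = r • Cpart (g : V → V) v := by
  simp only [Cpart, smul_comm Complex.I r, map_smul]
  rw [← smul_sub, smul_comm]

lemma Cpart_I_smul (g : V →L[ℝ] V) (v : V) :
    Cpart (g : V → V) (Complex.I • v) = Complex.I • Cpart (g : V → V) v := by
  simp only [Cpart]
  rw [smul_smul, Complex.I_mul_I, neg_one_smul, map_neg, smul_neg, sub_neg_eq_add,
    smul_comm Complex.I, smul_sub, smul_smul, Complex.I_mul_I, neg_one_smul, sub_neg_eq_add,
    add_comm]

lemma Cpart_smul (g : V →L[ℝ] V) (c : ℂ) (v : V) :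
    Cpart (g : V → V) (c • v) = c • Cpart (g : V → V) v := by
  have hc : ∀ w : V, c • w = c.re • w + c.im • (Complex.I • w) := by
    intro w
    calc c • w = ((c.re : ℂ) + (c.im : ℂ) * Complex.I) • w := by rw [Complex.re_add_im]
      _ = (c.re : ℂ) • w + ((c.im : ℂ) * Complex.I) • w := add_smul _ _ _
      _ = c.re • w + c.im • (Complex.I • w) := by
          rw [mul_smul, Complex.coe_smul, Complex.coe_smul]
  rw [hc v, Cpart_add, Cpart_real_smul, Cpart_real_smul, Cpart_I_smul, ← hc]

/-- `Cpart g` as a continuous `ℂ`-linear map. -/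
noncomputable def Clm (g : V →L[ℝ] V) : V →L[ℂ] V :=
  ⟨{ toFun := Cpart (g : V → V)
     map_add' := Cpart_add g
     map_smul' := fun c v => Cpart_smul g c v }, by
    simp only [LinearMap.coe_mk, AddHom.coe_mk]
    unfold Cpart
    fun_prop⟩

lemma Clm_apply (g : V →L[ℝ] V) (v : V) : Clm g v = Cpart (g : V → V) v := rfl

end Aux

/-- Let `g` be a symplectic automorphism of the complex Hilbert space `V` (a bounded
real-linear bijection preserving `Ω = Im⟨·|·⟩`), with complex-linear part `C_g` and
antilinear part `A_g`.  Then `C_g* C_g − A_g* A_g = I` relative to the real inner ℂ product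
`Re⟨·|·⟩` (i.e. `(C_g x|C_g y) − (A_g x|A_g y) = (x|y)` for all `x, y`), hence
`‖C_g v‖² = ‖A_g v‖² + ‖v‖²` for all `v`; consequently `C_g` is bounded below by `1`,
injective, has dense range, and is invertible. -/
theorem stmt17 {V : Type*} [NormedAddCommGroup V] [InnerProductSpace ℂ V] [CompleteSpace V]
    (g : V →L[ℝ] V) (hbij : Function.Bijective g)
    (hsymp : ∀ x y : V, (inner ℂ (g x) (g y) : ℂ).im = (inner ℂ x y : ℂ).im) :
    (∀ x y : V,
        (inner ℂ (Cpart (g : V → V) x) (Cpart (g : V → V) y) : ℂ).re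
          - (inner ℂ (Apart (g : V → V) x) (Apart (g : V → V) y) : ℂ).re
          = (inner ℂ x y : ℂ).re) ∧
    (∀ v : V, ‖Cpart (g : V → V) v‖ ^ 2 = ‖Apart (g : V → V) v‖ ^ 2 + ‖v‖ ^ 2) ∧
    (∀ v : V, ‖v‖ ≤ ‖Cpart (g : V → V) v‖) ∧
    Function.Injective (Cpart (g : V → V)) ∧
    DenseRange (Cpart (g : V → V)) ∧
    Function.Bijective (Cpart (g : V → V)) := by
  set G : V → V := (g : V → V) with hG
  set h : V → V := Function.invFun G with hhdef
  have hgh : ∀ z, G (h z) = z := fun z => Function.rightInverse_invFun hbij.surjective z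
  have hsymp_h : ∀ x y : V, (inner ℂ (h x) (h y) : ℂ).im = (inner ℂ x y : ℂ).im := by
    intro x y
    have := hsymp (h x) (h y)
    rw [hgh, hgh] at this
    exact this.symm
  have hiz : ∀ x z : V, (inner ℂ (G x) z : ℂ).im = (inner ℂ x (h z) : ℂ).im := by
    intro x z
    conv_lhs => rw [← hgh z]
    exact hsymp x (h z)
  have part1 := key G hsymp
  have part2 := key_norm G hsymp
  have part3 := key_bound G hsymp
  -- injectivity
  have hinj : Function.Injective (Cpart G) := by
    intro u w huw
    have hT : Clm g (u - w) = 0 := by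
      rw [map_sub]
      rw [Clm_apply, Clm_apply, ← hG, huw, sub_self]
    have : ‖u - w‖ ≤ 0 := by
      have := part3 (u - w)
      rw [show Cpart G (u - w) = Clm g (u - w) from rfl, hT, norm_zero] at this
      exact this
    have := norm_le_zero_iff.mp this
    exact sub_eq_zero.mp this
  -- surjectivity
  have hanti : AntilipschitzWith 1 (Clm g) :=
    ContinuousLinearMap.antilipschitz_of_bound (Clm g) (by
      intro x
      rw [NNReal.coe_one, one_mul]
      exact part3 x)
  have hclosedrange : IsClosed (Set.range (Clm g)) :=
    hanti.isClosed_range (Clm g).uniformContinuous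
  have hWclosed : IsClosed ((LinearMap.range (Clm g : V →ₗ[ℂ] V) : Submodule ℂ V) : Set V) := by
    rw [LinearMap.coe_range]
    exact hclosedrange
  haveI : CompleteSpace (LinearMap.range (Clm g : V →ₗ[ℂ] V) : Submodule ℂ V) :=
    hWclosed.completeSpace_coe
  have horth : (LinearMap.range (Clm g : V →ₗ[ℂ] V) : Submodule ℂ V)ᗮ = ⊥ := by
    rw [Submodule.eq_bot_iff]
    intro y hy
    have hzero : ∀ x : V, (inner ℂ (Cpart G x) y : ℂ) = 0 := by
      intro x
      exact (Submodule.mem_orthogonal _ y).mp hy (Clm g x) (LinearMap.mem_range_self _ x)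
    have h0 : (inner ℂ (Cpart h y) (Cpart h y) : ℂ).re = 0 := by
      rw [← adjoint_id G h hiz (Cpart h y) y, hzero]
      simp
    have hChy : Cpart h y = 0 := by
      rw [re_inner_self] at h0
      exact norm_eq_zero.mp (pow_eq_zero_iff two_ne_zero |>.mp h0)
    have : ‖y‖ ≤ 0 := by
      have := key_bound h hsymp_h y
      rwa [hChy, norm_zero] at this
    exact norm_le_zero_iff.mp this
  have hW : (LinearMap.range (Clm g : V →ₗ[ℂ] V) : Submodule ℂ V) = ⊤ :=
    Submodule.orthogonal_eq_bot_iff.mp horth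
  have hsurj : Function.Surjective (Cpart G) := by
    intro z
    have hz : z ∈ (LinearMap.range (Clm g : V →ₗ[ℂ] V) : Submodule ℂ V) := hW ▸ Submodule.mem_top
    rcases LinearMap.mem_range.mp hz with ⟨x, hx⟩
    exact ⟨x, hx⟩
  exact ⟨part1, part2, part3, hinj, hsurj.denseRange, hinj, hsurj⟩
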